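/- Let G be a group, n ≥ 3, E the set of idempotents of End F_n(G), and IG(E) the free idempotent generated monoid over E. Let a, b : {1,…,n} → G with a(1) = b(1) = 1 and let j, j' ∈ {1,…,n}. If a(j) = b(j') (equivalently, e_{1j} e_{a,1} = e_{1j'} e_{b,1} in End F_n(G)), then ē_{11} ē_{a,j} ē_{11} = ē_{11} ē_{b,j'} ē_{11} in IG(E). -/

import Mathlib

/-- An endomorphism of the rank-`n` free left `G`-act `F_n(G) = G × Fin n`
(the formal symbols `g x_i` are the pairs `(g, i)`), where the action is
`h • (g, i) = (h * g, i)` and equivariance says `(h • x) a = h • (x a)`. -/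
structure ActEnd (G : Type*) [Group G] (n : ℕ) : Type _ where
  toFun : G × Fin n → G × Fin n
  equivariant : ∀ (h : G) (x : G × Fin n),
    toFun (h * x.1, x.2) = (h * (toFun x).1, (toFun x).2)

namespace ActEnd

variable {G : Type*} [Group G] {n : ℕ}

/-- Composition is written left-to-right: `x (a * b) = (x a) b`. -/
instance : Monoid (ActEnd G n) where
  mul a b := ⟨fun x => b.toFun (a.toFun x), by
    intro h x
    try dsimp only
    rw [a.equivariant h x, b.equivariant]⟩
  one := ⟨id, fun _ _ => rfl⟩
  mul_assoc _ _ _ := rfl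
  one_mul _ := rfl
  mul_one _ := rfl

@[simp] theorem mul_toFun (a b : ActEnd G n) (x : G × Fin n) :
    (a * b).toFun x = b.toFun (a.toFun x) := rfl

theorem ext' {a b : ActEnd G n} (h : a.toFun = b.toFun) : a = b := by
  cases a; cases b; cases h; rfl

/-- The rank of an endomorphism of `F_n(G)`: the number of indices `j` such
that `G x_j` meets the image. -/
noncomputable def rank (a : ActEnd G n) : ℕ :=
  Nat.card {j : Fin n // ∃ x, (a.toFun x).2 = j}

end ActEnd

namespace ActEnd

variable {G : Type*} [Group G] {n : ℕ}

/-- The rank-1 idempotent `e_{a,j}` given by `(g x_t) e_{a,j} = (g * a t * (a j)⁻¹) x_j`.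
Taking `a` constantly `1` gives `e_{1j}`, and also `j = 0` gives `e_{11}`
(indices `1, …, n` are realised as `Fin n`, with `1 ↦ 0`). -/
def eaj (a : Fin n → G) (j : Fin n) : ActEnd G n :=
  ⟨fun x => (x.1 * a x.2 * (a j)⁻¹, j), by intro h x; simp [mul_assoc]⟩

theorem eaj_idem (a : Fin n → G) (j : Fin n) : eaj a j * eaj a j = eaj a j := by
  apply ext'
  funext x
  simp [eaj, mul_assoc]

/-- The map `a_g : g' x_t ↦ (g' * g) x_1`. -/
def aMap (g : G) (h0 : 0 < n) : ActEnd G n :=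
  ⟨fun x => (x.1 * g, ⟨0, h0⟩), by intro h x; simp [mul_assoc]⟩

end ActEnd

/-- The principal left ideal `M a` of `a`. -/
def lIdeal {M : Type*} [Monoid M] (a : M) : Set M := Set.range fun m => m * a

/-- The principal right ideal `a M` of `a`. -/
def rIdeal {M : Type*} [Monoid M] (a : M) : Set M := Set.range fun m => a * m

/-- The `H`-class of `e`: all elements that are both `L`- and `R`-related to `e`. -/
def hClass {M : Type*} [Monoid M] (e : M) : Set M :=
  {a | lIdeal a = lIdeal e ∧ rIdeal a = rIdeal e}

/-- The defining relation of the free idempotent generated monoid `IG(E)`: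
`ē f̄ = (e f)‾` whenever `{e, f} ∩ {e f, f e} ≠ ∅`. -/
def igRel (M : Type*) [Monoid M] :
    FreeMonoid {e : M // e * e = e} → FreeMonoid {e : M // e * e = e} → Prop :=
  fun x y => ∃ e f g : {e : M // e * e = e},
    (e.1 * f.1 = e.1 ∨ e.1 * f.1 = f.1 ∨ f.1 * e.1 = e.1 ∨ f.1 * e.1 = f.1) ∧
    e.1 * f.1 = g.1 ∧
    x = FreeMonoid.of e * FreeMonoid.of f ∧ y = FreeMonoid.of g

/-- The free idempotent generated monoid over the biordered set of idempotents
of `M`: the presented monoid with generators `ē` for each idempotent `e` and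
relations `ē f̄ = (e f)‾` whenever `{e, f} ∩ {e f, f e} ≠ ∅`. -/
abbrev IG (M : Type*) [Monoid M] : Type _ := (conGen (igRel M)).Quotient

/-- The generator `ē` of `IG(E)` corresponding to the idempotent `e`. -/
def ebar {M : Type*} [Monoid M] (e : {e : M // e * e = e}) : IG M :=
  (conGen (igRel M)).mk' (FreeMonoid.of e)

/-- `ē_{a,j}` as an element of `IG(E)` for `E` the idempotents of `End F_n(G)`. -/
def igE {G : Type*} [Group G] {n : ℕ} (a : Fin n → G) (j : Fin n) : IG (ActEnd G n) :=
  ebar ⟨ActEnd.eaj a j, ActEnd.eaj_idem a j⟩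

/-- `ē_{11}` as an element of `IG(E)`. -/
def ig11 {G : Type*} [Group G] {n : ℕ} (h0 : 0 < n) : IG (ActEnd G n) :=
  igE (fun _ => (1 : G)) ⟨0, h0⟩


section Stmt16Aux

/-- Key lemma: a basic pair of idempotents multiplies inside `IG`. -/
theorem ebar_mul_eq {M : Type*} [Monoid M] (e f g : {e : M // e * e = e})
    (hbasic : e.1 * f.1 = e.1 ∨ e.1 * f.1 = f.1 ∨ f.1 * e.1 = e.1 ∨ f.1 * e.1 = f.1)
    (hg : e.1 * f.1 = g.1) : ebar e * ebar f = ebar g := by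
  have : (conGen (igRel M)).mk' (FreeMonoid.of e * FreeMonoid.of f) =
      (conGen (igRel M)).mk' (FreeMonoid.of g) :=
    (Con.eq _).mpr (ConGen.Rel.of _ _ ⟨e, f, g, hbasic, hg, rfl, rfl⟩)
  calc ebar e * ebar f = (conGen (igRel M)).mk' (FreeMonoid.of e * FreeMonoid.of f) :=
        (map_mul _ _ _).symm
    _ = ebar g := this

namespace ActEnd

variable {G : Type*} [Group G] {n : ℕ}

/-- The idempotent retraction `x_t ↦ x_0` for `t = 0`, `x_t ↦ x_j` otherwise,
identity on group components. -/
def retr (h0 : 0 < n) (j : Fin n) : ActEnd G n :=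
  ⟨fun x => (x.1, if x.2 = ⟨0, h0⟩ then ⟨0, h0⟩ else j), fun _ _ => rfl⟩

/-- The idempotent sending `x_j ↦ x_{j'}` and fixing all other `x_t`. -/
def sw (j j' : Fin n) : ActEnd G n :=
  ⟨fun x => (x.1, if x.2 = j then j' else x.2), fun _ _ => rfl⟩

theorem retr_idem (h0 : 0 < n) (j : Fin n) :
    retr (G := G) h0 j * retr h0 j = retr h0 j := by
  apply ext'; funext x
  simp only [mul_toFun, retr]
  by_cases hx : x.2 = (⟨0, h0⟩ : Fin n) <;> by_cases hj : j = (⟨0, h0⟩ : Fin n) <;>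
    simp [hx, hj]

theorem sw_idem (j j' : Fin n) : sw (G := G) j j' * sw j j' = sw j j' := by
  apply ext'; funext x
  simp only [mul_toFun, sw]
  by_cases hx : x.2 = j <;> by_cases h : j' = j <;> simp [hx, h]

end ActEnd

end Stmt16Aux

/-- If `a j = b j'` (equivalently `e_{1j} e_{a,1} = e_{1j'} e_{b,1}`), then
`ē_{11} ē_{a,j} ē_{11} = ē_{11} ē_{b,j'} ē_{11}` in `IG(E)`. -/
theorem stmt16 {G : Type*} [Group G] {n : ℕ} (hn : 3 ≤ n)
    (a b : Fin n → G) (ha : a ⟨0, by omega⟩ = 1) (hb : b ⟨0, by omega⟩ = 1)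
    (j j' : Fin n) (hab : a j = b j') :
    ig11 (G := G) (n := n) (by omega) * igE a j * ig11 (G := G) (n := n) (by omega) =
      ig11 (G := G) (n := n) (by omega) * igE b j' * ig11 (G := G) (n := n) (by omega) := by
  have h0 : 0 < n := by omega
  have ha' : a ⟨0, h0⟩ = 1 := ha
  have hb' : b ⟨0, h0⟩ = 1 := hb
  set z : Fin n := ⟨0, h0⟩ with hzdef
  set c : Fin n → G := fun t => if t = z then 1 else a j with hcdef
  have hcj : c j = a j := by
    show (if j = z then 1 else a j) = a j
    by_cases h : j = z
    · rw [if_pos h, h, ha']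
    · rw [if_neg h]
  have hcj' : c j' = a j := by
    show (if j' = z then 1 else a j) = a j
    by_cases h : j' = z
    · rw [if_pos h, hab, h, hb']
    · rw [if_neg h]
  -- abbreviations for the idempotents involved
  set E11 : {e : ActEnd G n // e * e = e} :=
    ⟨ActEnd.eaj (fun _ => (1 : G)) z, ActEnd.eaj_idem _ _⟩ with hE11
  set EA : {e : ActEnd G n // e * e = e} := ⟨ActEnd.eaj a j, ActEnd.eaj_idem a j⟩ with hEA
  set EB : {e : ActEnd G n // e * e = e} := ⟨ActEnd.eaj b j', ActEnd.eaj_idem b j'⟩ with hEB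
  set ECj : {e : ActEnd G n // e * e = e} := ⟨ActEnd.eaj c j, ActEnd.eaj_idem c j⟩ with hECj
  set ECj' : {e : ActEnd G n // e * e = e} :=
    ⟨ActEnd.eaj c j', ActEnd.eaj_idem c j'⟩ with hECj'
  set U : {e : ActEnd G n // e * e = e} :=
    ⟨ActEnd.retr h0 j, ActEnd.retr_idem h0 j⟩ with hU
  set U' : {e : ActEnd G n // e * e = e} :=
    ⟨ActEnd.retr h0 j', ActEnd.retr_idem h0 j'⟩ with hU'
  set V : {e : ActEnd G n // e * e = e} := ⟨ActEnd.sw j j', ActEnd.sw_idem j j'⟩ with hV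
  -- product computations in `ActEnd`
  have p1 : E11.1 * U.1 = E11.1 := by
    apply ActEnd.ext'; funext x
    simp [hE11, hU, ActEnd.eaj, ActEnd.retr, ← hzdef]
  have p2 : EA.1 * U.1 = EA.1 := by
    apply ActEnd.ext'; funext x
    simp only [hEA, hU, ActEnd.mul_toFun, ActEnd.eaj, ActEnd.retr, ← hzdef]
    by_cases h : j = z <;> simp [h]
  have p3 : U.1 * EA.1 = ECj.1 := by
    apply ActEnd.ext'; funext x
    simp only [hU, hEA, hECj, ActEnd.mul_toFun, ActEnd.eaj, ActEnd.retr, ← hzdef]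
    simp only [hcdef]
    by_cases hx : x.2 = z <;> by_cases hj : j = z <;> simp [hx, hj, ha', mul_assoc]
  have p4 : V.1 * E11.1 = E11.1 := by
    apply ActEnd.ext'; funext x
    simp [hV, hE11, ActEnd.eaj, ActEnd.sw]
  have p5 : V.1 * ECj.1 = ECj.1 := by
    apply ActEnd.ext'; funext x
    simp only [hV, hECj, ActEnd.mul_toFun, ActEnd.eaj, ActEnd.sw]
    by_cases h : x.2 = j
    · rw [if_pos h, h, hcj', hcj]
    · rw [if_neg h]
  have p6 : ECj.1 * V.1 = ECj'.1 := by
    apply ActEnd.ext'; funext x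
    simp only [hECj, hV, hECj', ActEnd.mul_toFun, ActEnd.eaj, ActEnd.sw]
    rw [hcj, hcj']
    simp
  have p7 : E11.1 * U'.1 = E11.1 := by
    apply ActEnd.ext'; funext x
    simp [hE11, hU', ActEnd.eaj, ActEnd.retr, ← hzdef]
  have p8 : EB.1 * U'.1 = EB.1 := by
    apply ActEnd.ext'; funext x
    simp only [hEB, hU', ActEnd.mul_toFun, ActEnd.eaj, ActEnd.retr, ← hzdef]
    by_cases h : j' = z <;> simp [h]
  have p9 : U'.1 * EB.1 = ECj'.1 := by
    apply ActEnd.ext'; funext x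
    simp only [hU', hEB, hECj', ActEnd.mul_toFun, ActEnd.eaj, ActEnd.retr, ← hzdef]
    simp only [hcdef, hab]
    by_cases hx : x.2 = z <;> by_cases hj : j' = z <;> simp [hx, hj, hb', mul_assoc]
  -- the corresponding relations in IG
  have s1 : ebar E11 * ebar U = ebar E11 := ebar_mul_eq _ _ _ (Or.inl p1) p1
  have s2 : ebar U * ebar EA = ebar ECj :=
    ebar_mul_eq _ _ _ (Or.inr (Or.inr (Or.inr p2))) p3
  have s3 : ebar ECj * ebar V = ebar ECj' :=
    ebar_mul_eq _ _ _ (Or.inr (Or.inr (Or.inl p5))) p6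
  have s4 : ebar V * ebar E11 = ebar E11 := ebar_mul_eq _ _ _ (Or.inr (Or.inl p4)) p4
  have s7 : ebar E11 * ebar U' = ebar E11 := ebar_mul_eq _ _ _ (Or.inl p7) p7
  have s9 : ebar U' * ebar EB = ebar ECj' :=
    ebar_mul_eq _ _ _ (Or.inr (Or.inr (Or.inr p8))) p9
  have L1 : ebar E11 * ebar EA = ebar E11 * ebar ECj := by
    rw [← s2, ← mul_assoc, s1]
  have L2 : ebar ECj * ebar E11 = ebar ECj' * ebar E11 := by
    rw [← s3, mul_assoc, s4]
  have R1 : ebar E11 * ebar EB = ebar E11 * ebar ECj' := by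
    rw [← s9, ← mul_assoc, s7]
  show ebar E11 * ebar EA * ebar E11 = ebar E11 * ebar EB * ebar E11
  calc ebar E11 * ebar EA * ebar E11 = ebar E11 * ebar ECj * ebar E11 := by rw [L1]
    _ = ebar E11 * (ebar ECj * ebar E11) := mul_assoc _ _ _
    _ = ebar E11 * (ebar ECj' * ebar E11) := by rw [L2]
    _ = ebar E11 * ebar ECj' * ebar E11 := (mul_assoc _ _ _).symm
    _ = ebar E11 * ebar EB * ebar E11 := by rw [R1]
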